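/- For any real 2×n matrix with columns p, q ∈ ℝⁿ, the tropical 2×2 minors m_{kl} = max{p_k + q_l, p_l + q_k} satisfy the tropical Plücker relation: for any four indices i < j < k < l, the maximum of {m_{ij} + m_{kl}, m_{ik} + m_{jl}, m_{il} + m_{jk}} is attained at least twice. -/
import Mathlib

lemma aux11 (x y z : ℝ)
    (h : (x = y ∧ z ≤ x) ∨ (x = z ∧ y ≤ x) ∨ (y = z ∧ x ≤ y)) :
    (x = max x (max y z) ∧ y = max x (max y z)) ∨
    (x = max x (max y z) ∧ z = max x (max y z)) ∨
    (y = max x (max y z) ∧ z = max x (max y z)) := by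
  rcases h with ⟨h1, h2⟩ | ⟨h1, h2⟩ | ⟨h1, h2⟩
  · have e : max x (max y z) = x := by
      rw [max_eq_left]; exact max_le (le_of_eq h1.symm) h2
    exact Or.inl ⟨e.symm, by rw [e]; exact h1.symm⟩
  · have e : max x (max y z) = x := by
      rw [max_eq_left]; exact max_le h2 (le_of_eq h1.symm)
    exact Or.inr (Or.inl ⟨e.symm, by rw [e]; exact h1.symm⟩)
  · have e : max x (max y z) = y := by
      rw [max_eq_right, max_eq_left h1.ge]
      exact le_max_of_le_left h2
    exact Or.inr (Or.inr ⟨e.symm, by rw [e]; exact h1.symm⟩)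

/-- Tropical Plücker relation: for any `p, q ∈ ℝⁿ`, the tropical minors
`m_{kl} = max{p_k + q_l, p_l + q_k}` satisfy, for any `i < j < k < l`, that the
maximum of `m_{ij}+m_{kl}`, `m_{ik}+m_{jl}`, `m_{il}+m_{jk}` is attained at
least twice. -/
theorem stmt11 (n : ℕ) (p q : Fin n → ℝ) (i j k l : Fin n)
    (hij : i < j) (hjk : j < k) (hkl : k < l) :
    let m : Fin n → Fin n → ℝ := fun a b => max (p a + q b) (p b + q a)
    let x := m i j + m k l
    let y := m i k + m j l
    let z := m i l + m j k
    (x = max x (max y z) ∧ y = max x (max y z)) ∨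
    (x = max x (max y z) ∧ z = max x (max y z)) ∨
    (y = max x (max y z) ∧ z = max x (max y z)) := by
  intro m x y z
  apply aux11
  show (m i j + m k l = m i k + m j l ∧ _) ∨ _
  simp only [m, x, y, z]
  rcases max_cases (p i + q j) (p j + q i) with ⟨e1, f1⟩ | ⟨e1, f1⟩ <;>
  rcases max_cases (p k + q l) (p l + q k) with ⟨e2, f2⟩ | ⟨e2, f2⟩ <;>
  rcases max_cases (p i + q k) (p k + q i) with ⟨e3, f3⟩ | ⟨e3, f3⟩ <;>
  rcases max_cases (p j + q l) (p l + q j) with ⟨e4, f4⟩ | ⟨e4, f4⟩ <;>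
  rcases max_cases (p i + q l) (p l + q i) with ⟨e5, f5⟩ | ⟨e5, f5⟩ <;>
  rcases max_cases (p j + q k) (p k + q j) with ⟨e6, f6⟩ | ⟨e6, f6⟩ <;>
  rw [e1, e2, e3, e4, e5, e6] <;>
  first
    | exact Or.inl ⟨by linarith, by linarith⟩
    | exact Or.inr (Or.inl ⟨by linarith, by linarith⟩)
    | exact Or.inr (Or.inr ⟨by linarith, by linarith⟩)
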